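/- Let E be a CPTP map on the d×d complex matrices. Then for every matrix X the Cesàro means (1/T) Σ_{i=0}^{T−1} E^i(X) converge as T → ∞; the limit defines a linear map E_∞ which is CPTP and satisfies E_∞ ∘ E = E ∘ E_∞ = E_∞ ∘ E_∞ = E_∞, and the fixed-point set of E_∞ equals its range and equals fix(E). In particular, E_∞ is a CPTP projection onto fix(E). -/

import Mathlib

open Matrix Filter
open scoped ComplexOrder

/-- A map on `d × d` complex matrices is CPTP if it admits a Kraus (operator-sum)
representation `E(X) = ∑ k, M k * X * (M k)ᴴ` with `∑ k, (M k)ᴴ * M k = 1`. -/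
def IsCPTP {d : ℕ} (E : Matrix (Fin d) (Fin d) ℂ → Matrix (Fin d) (Fin d) ℂ) : Prop :=
  ∃ (m : ℕ) (M : Fin m → Matrix (Fin d) (Fin d) ℂ),
    (∀ X, E X = ∑ k, M k * X * (M k)ᴴ) ∧ (∑ k, (M k)ᴴ * M k = 1)

namespace CesaroAux

variable {d : ℕ}




theorem isCPTP_id : IsCPTP (id : Matrix (Fin d) (Fin d) ℂ → Matrix (Fin d) (Fin d) ℂ) :=
  ⟨1, fun _ => 1, by simp, by simp⟩

theorem cptp_comp {F G : Matrix (Fin d) (Fin d) ℂ → Matrix (Fin d) (Fin d) ℂ}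
    (hF : IsCPTP F) (hG : IsCPTP G) : IsCPTP (F ∘ G) := by
  obtain ⟨m, M, hM, hM1⟩ := hF
  obtain ⟨n, N, hN, hN1⟩ := hG
  refine ⟨m * n, fun k => M (finProdFinEquiv.symm k).1 * N (finProdFinEquiv.symm k).2, ?_, ?_⟩
  · intro X
    rw [Function.comp_apply, hM, hN,
      ← Fintype.sum_equiv finProdFinEquiv
        (fun p : Fin m × Fin n => (M p.1 * N p.2) * X * (M p.1 * N p.2)ᴴ) _
        (fun p => by simp)]
    rw [Fintype.sum_prod_type]
    refine Finset.sum_congr rfl fun j _ => ?_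
    rw [Finset.mul_sum, Finset.sum_mul]
    refine Finset.sum_congr rfl fun k _ => ?_
    simp only [conjTranspose_mul]
    noncomm_ring
  · rw [← Fintype.sum_equiv finProdFinEquiv
      (fun p : Fin m × Fin n => (M p.1 * N p.2)ᴴ * (M p.1 * N p.2)) _
      (fun p => by simp), Fintype.sum_prod_type_right]
    calc ∑ k : Fin n, ∑ j : Fin m, (M j * N k)ᴴ * (M j * N k)
        = ∑ k : Fin n, (N k)ᴴ * (∑ j, (M j)ᴴ * M j) * N k := by
          refine Finset.sum_congr rfl fun k _ => ?_
          rw [Finset.mul_sum, Finset.sum_mul]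
          refine Finset.sum_congr rfl fun j _ => ?_
          simp only [conjTranspose_mul]
          noncomm_ring
      _ = 1 := by rw [hM1]; simpa using hN1

theorem cptp_iterate {E : Matrix (Fin d) (Fin d) ℂ → Matrix (Fin d) (Fin d) ℂ}
    (hE : IsCPTP E) (n : ℕ) : IsCPTP (E^[n]) := by
  induction n with
  | zero => exact isCPTP_id
  | succ n ih => rw [Function.iterate_succ]; exact cptp_comp ih hE

theorem cptp_trace_eq {E : Matrix (Fin d) (Fin d) ℂ → Matrix (Fin d) (Fin d) ℂ}
    (hE : IsCPTP E) (X : Matrix (Fin d) (Fin d) ℂ) : (E X).trace = X.trace := by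
  obtain ⟨m, M, hM, hM1⟩ := hE
  rw [hM, trace_sum]
  calc ∑ k, (M k * X * (M k)ᴴ).trace = ∑ k, ((M k)ᴴ * M k * X).trace := by
        refine Finset.sum_congr rfl fun k _ => ?_
        rw [trace_mul_cycle]
    _ = X.trace := by
        rw [← trace_sum, ← Finset.sum_mul, hM1, Matrix.one_mul]

theorem cptp_posSemidef {E : Matrix (Fin d) (Fin d) ℂ → Matrix (Fin d) (Fin d) ℂ}
    (hE : IsCPTP E) {X : Matrix (Fin d) (Fin d) ℂ} (hX : X.PosSemidef) :
    (E X).PosSemidef := by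
  obtain ⟨m, M, hM, hM1⟩ := hE
  rw [hM]
  refine Finset.sum_induction _ _ (fun a b ha hb => ha.add hb) Matrix.PosSemidef.zero ?_
  exact fun k _ => hX.mul_mul_conjTranspose_same (M k)




theorem psd_diag_nonneg {X : Matrix (Fin d) (Fin d) ℂ} (hX : X.PosSemidef) (i : Fin d) :
    0 ≤ X i i := by
  have := hX.dotProduct_mulVec_nonneg (Pi.single i 1)
  simpa [← Pi.single_star, Matrix.mulVec_single, single_dotProduct] using this

theorem psd_quad {X : Matrix (Fin d) (Fin d) ℂ} (a b : Fin d) (θ : ℂ) :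
    star (Pi.single a (1:ℂ) + Pi.single b θ) ⬝ᵥ (X *ᵥ (Pi.single a 1 + Pi.single b θ))
      = X a a + X a b * θ + star θ * X b a + star θ * X b b * θ := by
  simp only [Matrix.mulVec_add, Matrix.mulVec_single, star_add, ← Pi.single_star,
    add_dotProduct, single_dotProduct, star_one, dotProduct_add, Pi.add_apply, Pi.smul_apply,
    Matrix.col_apply, MulOpposite.smul_eq_mul_unop, MulOpposite.unop_op]
  ring

theorem trace_re_nonneg {X : Matrix (Fin d) (Fin d) ℂ} (hX : X.PosSemidef) :
    0 ≤ X.trace.re := by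
  rw [Matrix.trace, Complex.re_sum]
  exact Finset.sum_nonneg fun i _ => ((Complex.le_def.mp (psd_diag_nonneg hX i)).1)

theorem diag_re_le_trace {X : Matrix (Fin d) (Fin d) ℂ} (hX : X.PosSemidef) (a : Fin d) :
    (X a a).re ≤ X.trace.re := by
  rw [Matrix.trace, Complex.re_sum]
  exact Finset.single_le_sum (fun i _ => (Complex.le_def.mp (psd_diag_nonneg hX i)).1)
    (Finset.mem_univ a)

theorem psd_entry_norm_le {X : Matrix (Fin d) (Fin d) ℂ} (hX : X.PosSemidef) (a b : Fin d) :
    ‖X a b‖ ≤ X.trace.re := by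
  by_cases hab : a = b
  · subst hab
    have h0 := psd_diag_nonneg hX a
    have him : (X a a).im = 0 := (Complex.le_def.mp h0).2.symm
    have hre : 0 ≤ (X a a).re := (Complex.le_def.mp h0).1
    have hz : X a a = ((X a a).re : ℂ) := Complex.ext rfl (by simp [him])
    rw [hz, Complex.norm_real, Real.norm_of_nonneg hre]
    exact diag_re_le_trace hX a
  · by_cases h0 : X a b = 0
    · rw [h0, norm_zero]; exact trace_re_nonneg hX
    · set c := X a b with hc
      have hnc : (‖c‖ : ℂ) ≠ 0 := by simpa using h0
      set θ : ℂ := -(starRingEnd ℂ c) * (‖c‖ : ℂ)⁻¹ with hθ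
      have h := hX.dotProduct_mulVec_nonneg (Pi.single a 1 + Pi.single b θ)
      rw [psd_quad] at h
      have hba : X b a = starRingEnd ℂ c := by
        conv_lhs => rw [← hX.1]
        simp [Matrix.conjTranspose_apply, hc]
      have hcc : (starRingEnd ℂ c) * c = (‖c‖:ℂ) * (‖c‖:ℂ) := by
        rw [mul_comm, Complex.mul_conj, Complex.normSq_eq_norm_sq]
        push_cast
        ring
      have hstarθ : star θ = -c * (‖c‖:ℂ)⁻¹ := by
        simp only [hθ, star_mul', star_neg, star_inv₀, RCLike.star_def, Complex.conj_conj,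
          Complex.conj_ofReal]
      have h1 : X a b * θ = -(‖c‖:ℂ) := by
        rw [← hc, hθ,
          show c * (-(starRingEnd ℂ c) * (‖c‖:ℂ)⁻¹) = -((starRingEnd ℂ c * c) * (‖c‖:ℂ)⁻¹)
            from by ring, hcc, mul_assoc, mul_inv_cancel₀ hnc, mul_one]
      have h2 : star θ * X b a = -(‖c‖:ℂ) := by
        rw [hba, hstarθ,
          show -c * (‖c‖:ℂ)⁻¹ * (starRingEnd ℂ c) = -((starRingEnd ℂ c * c) * (‖c‖:ℂ)⁻¹)
            from by ring, hcc, mul_assoc, mul_inv_cancel₀ hnc, mul_one]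
      have hθθ : star θ * θ = 1 := by
        rw [hstarθ, hθ,
          show -c * (‖c‖:ℂ)⁻¹ * (-(starRingEnd ℂ c) * (‖c‖:ℂ)⁻¹)
            = ((starRingEnd ℂ c * c) * (‖c‖:ℂ)⁻¹) * (‖c‖:ℂ)⁻¹ from by ring, hcc]
        field_simp
      rw [show star θ * X b b * θ = X b b * (star θ * θ) from by ring, hθθ, mul_one,
        h1, h2] at h
      -- h : 0 ≤ X a a + -(‖c‖:ℂ) + -(‖c‖:ℂ) + X b b
      have hre := (Complex.le_def.mp h).1
      simp only [Complex.add_re, Complex.neg_re, Complex.ofReal_re, Complex.zero_re] at hre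
      have hsum : (X a a).re + (X b b).re ≤ X.trace.re := by
        rw [Matrix.trace, Complex.re_sum]
        have : (X a a).re + (X b b).re = ∑ i ∈ ({a, b} : Finset (Fin d)), (X i i).re := by
          rw [Finset.sum_pair hab]
        rw [this]
        exact Finset.sum_le_sum_of_subset_of_nonneg (Finset.subset_univ _)
          (fun i _ _ => (Complex.le_def.mp (psd_diag_nonneg hX i)).1)
      have : ‖c‖ ≤ (X a a).re + (X b b).re - ‖c‖ := by linarith
      have hcn : 0 ≤ ‖c‖ := norm_nonneg _
      linarith



theorem herm_quad_conj {X : Matrix (Fin d) (Fin d) ℂ} (hX : X.IsHermitian)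
    (v : Fin d → ℂ) :
    starRingEnd ℂ (star v ⬝ᵥ (X *ᵥ v)) = star v ⬝ᵥ (X *ᵥ v) := by
  have hXc : ∀ i j, starRingEnd ℂ (X i j) = X j i := by
    intro i j
    conv_rhs => rw [← hX]
    simp [Matrix.conjTranspose_apply]
  simp only [dotProduct, Matrix.mulVec, Finset.mul_sum, map_sum, _root_.map_mul,
    Pi.star_apply, RCLike.star_def, Complex.conj_conj, hXc]
  rw [Finset.sum_comm]
  refine Finset.sum_congr rfl fun i _ => Finset.sum_congr rfl fun j _ => by ring

theorem quad_norm_le (X : Matrix (Fin d) (Fin d) ℂ) (v : Fin d → ℂ) :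
    ‖star v ⬝ᵥ (X *ᵥ v)‖ ≤ (∑ i, ∑ j, ‖X i j‖) * (∑ i, ‖v i‖^2) := by
  have hvn : ∀ i j, ‖v i‖ * ‖v j‖ ≤ ∑ k, ‖v k‖^2 := by
    intro i j
    have ha : ‖v i‖^2 ≤ ∑ k, ‖v k‖^2 :=
      Finset.single_le_sum (fun k _ => sq_nonneg ‖v k‖) (Finset.mem_univ i)
    have hb : ‖v j‖^2 ≤ ∑ k, ‖v k‖^2 :=
      Finset.single_le_sum (fun k _ => sq_nonneg ‖v k‖) (Finset.mem_univ j)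
    nlinarith [sq_nonneg (‖v i‖ - ‖v j‖)]
  have expand : star v ⬝ᵥ (X *ᵥ v) = ∑ i, ∑ j, star (v i) * (X i j * v j) := by
    simp only [dotProduct, Matrix.mulVec, Finset.mul_sum, Pi.star_apply]
  rw [expand]
  calc ‖∑ i, ∑ j, star (v i) * (X i j * v j)‖
      ≤ ∑ i, ∑ j, ‖star (v i) * (X i j * v j)‖ := by
        refine (norm_sum_le _ _).trans (Finset.sum_le_sum fun i _ => norm_sum_le _ _)
    _ ≤ ∑ i, ∑ j, ‖X i j‖ * (∑ k, ‖v k‖^2) := by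
        refine Finset.sum_le_sum fun i _ => Finset.sum_le_sum fun j _ => ?_
        rw [norm_mul, norm_mul, norm_star]
        calc ‖v i‖ * (‖X i j‖ * ‖v j‖) = ‖X i j‖ * (‖v i‖ * ‖v j‖) := by ring
          _ ≤ ‖X i j‖ * (∑ k, ‖v k‖^2) :=
            mul_le_mul_of_nonneg_left (hvn i j) (norm_nonneg _)
    _ = (∑ i, ∑ j, ‖X i j‖) * (∑ i, ‖v i‖^2) := by
        rw [Finset.sum_mul]
        exact Finset.sum_congr rfl fun i _ => (Finset.sum_mul _ _ _).symm

theorem herm_shift_psd {X : Matrix (Fin d) (Fin d) ℂ} (hX : X.IsHermitian) :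
    (X + (((∑ i, ∑ j, ‖X i j‖ : ℝ)) : ℂ) • 1).PosSemidef := by
  set S : ℝ := ∑ i, ∑ j, ‖X i j‖ with hS
  rw [Matrix.posSemidef_iff_dotProduct_mulVec]
  constructor
  · have h1 : ((S : ℂ) • (1 : Matrix (Fin d) (Fin d) ℂ)).IsHermitian := by
      rw [Matrix.IsHermitian, Matrix.conjTranspose_smul]
      simp [Complex.conj_ofReal]
    exact hX.add h1
  · intro v
    have hsv : star v ⬝ᵥ v = ((∑ i, ‖v i‖^2 : ℝ) : ℂ) := by
      push_cast
      simp only [dotProduct, Pi.star_apply, RCLike.star_def]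
      refine Finset.sum_congr rfl fun i _ => ?_
      rw [mul_comm, Complex.mul_conj, Complex.normSq_eq_norm_sq]
      push_cast
      ring
    rw [Matrix.add_mulVec, dotProduct_add, Matrix.smul_mulVec,
      Matrix.one_mulVec, dotProduct_smul, hsv, smul_eq_mul, ← Complex.ofReal_mul]
    set q := star v ⬝ᵥ (X *ᵥ v) with hq
    set n : ℝ := ∑ i, ‖v i‖^2 with hn
    have hqc := herm_quad_conj hX v
    have him : q.im = 0 := by
      have := congrArg Complex.im hqc
      simp only [Complex.conj_im] at this
      linarith
    have hqn : ‖q‖ ≤ S * n := quad_norm_le X v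
    have hre : -q.re ≤ S * n := by
      have : |q.re| ≤ ‖q‖ := Complex.abs_re_le_norm q
      rw [abs_le] at this
      linarith
    rw [Complex.le_def]
    constructor
    · simp only [Complex.add_re, Complex.zero_re, Complex.mul_re, Complex.ofReal_re,
        Complex.ofReal_im]
      nlinarith [hre]
    · simp [him]



theorem cptp_apply_add_smul {F : Matrix (Fin d) (Fin d) ℂ → Matrix (Fin d) (Fin d) ℂ}
    (hF : IsCPTP F) (A B : Matrix (Fin d) (Fin d) ℂ) (c : ℂ) :
    F (A + c • B) = F A + c • F B := by
  obtain ⟨m, M, hM, -⟩ := hF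
  rw [hM, hM, hM, Finset.smul_sum, ← Finset.sum_add_distrib]
  refine Finset.sum_congr rfl fun k _ => ?_
  rw [Matrix.mul_add, Matrix.add_mul, mul_smul_comm, smul_mul_assoc]

theorem cptp_zero {F : Matrix (Fin d) (Fin d) ℂ → Matrix (Fin d) (Fin d) ℂ}
    (hF : IsCPTP F) : F 0 = 0 := by
  obtain ⟨m, M, hM, -⟩ := hF
  rw [hM]
  simp

theorem cptp_exists_linearMap {E : Matrix (Fin d) (Fin d) ℂ → Matrix (Fin d) (Fin d) ℂ}
    (hE : IsCPTP E) :
    ∃ L : Matrix (Fin d) (Fin d) ℂ →ₗ[ℂ] Matrix (Fin d) (Fin d) ℂ, ∀ X, L X = E X := by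
  refine ⟨{ toFun := E, map_add' := fun A B => ?_, map_smul' := fun c A => ?_ }, fun X => rfl⟩
  · have := cptp_apply_add_smul hE A B 1
    simpa using this
  · have := cptp_apply_add_smul hE 0 A c
    simpa [cptp_zero hE] using this


theorem cptp_pow_entry_bound {E : Matrix (Fin d) (Fin d) ℂ → Matrix (Fin d) (Fin d) ℂ}
    (hE : IsCPTP E) (X : Matrix (Fin d) (Fin d) ℂ) :
    ∃ C : ℝ, ∀ (n : ℕ) (a b : Fin d), ‖(E^[n] X) a b‖ ≤ C := by
  set H := ((1:ℂ)/2) • (X + Xᴴ) with hH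
  set K := (-(Complex.I)/2) • (X - Xᴴ) with hK
  have hHh : H.IsHermitian := by
    rw [hH, Matrix.IsHermitian, Matrix.conjTranspose_smul, Matrix.conjTranspose_add,
      Matrix.conjTranspose_conjTranspose,
      show star ((1:ℂ)/2) = (1:ℂ)/2 from by simp, add_comm]
  have hKh : K.IsHermitian := by
    rw [hK, Matrix.IsHermitian, Matrix.conjTranspose_smul, Matrix.conjTranspose_sub,
      Matrix.conjTranspose_conjTranspose,
      show star (-(Complex.I)/2) = Complex.I/2 from by simp [Complex.ext_iff]]
    match_scalars <;> simp <;> ring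
  set SH : ℝ := ∑ i, ∑ j, ‖H i j‖ with hSH
  set SK : ℝ := ∑ i, ∑ j, ‖K i j‖ with hSK
  have hSHnn : 0 ≤ SH :=
    Finset.sum_nonneg fun i _ => Finset.sum_nonneg fun j _ => norm_nonneg _
  have hSKnn : 0 ≤ SK :=
    Finset.sum_nonneg fun i _ => Finset.sum_nonneg fun j _ => norm_nonneg _
  have hPpsd : (H + (SH:ℂ) • 1).PosSemidef := by rw [hSH]; exact herm_shift_psd hHh
  have hQpsd : (K + (SK:ℂ) • 1).PosSemidef := by rw [hSK]; exact herm_shift_psd hKh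
  refine ⟨(H + (SH:ℂ) • 1).trace.re + SH * (1 : Matrix (Fin d) (Fin d) ℂ).trace.re
    + (K + (SK:ℂ) • 1).trace.re + SK * (1 : Matrix (Fin d) (Fin d) ℂ).trace.re, ?_⟩
  intro n a b
  have hCP := cptp_iterate hE n
  have hdec : X = (((H + (SH:ℂ) • 1) + (-(SH:ℂ)) • 1) + Complex.I • (K + (SK:ℂ) • 1))
      + (-(Complex.I * SK)) • 1 := by
    rw [hH, hK]
    match_scalars <;> simp [Complex.ext_iff] <;> ring
  have t1 : ‖(E^[n] (H + (SH:ℂ) • 1)) a b‖ ≤ (H + (SH:ℂ) • 1).trace.re := by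
    have := psd_entry_norm_le (cptp_posSemidef hCP hPpsd) a b
    rwa [cptp_trace_eq hCP] at this
  have t2 : ‖(E^[n] (K + (SK:ℂ) • 1)) a b‖ ≤ (K + (SK:ℂ) • 1).trace.re := by
    have := psd_entry_norm_le (cptp_posSemidef hCP hQpsd) a b
    rwa [cptp_trace_eq hCP] at this
  have t3 : ‖(E^[n] (1 : Matrix (Fin d) (Fin d) ℂ)) a b‖
      ≤ (1 : Matrix (Fin d) (Fin d) ℂ).trace.re := by
    have := psd_entry_norm_le (cptp_posSemidef hCP Matrix.PosSemidef.one) a b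
    rwa [cptp_trace_eq hCP] at this
  conv_lhs => rw [hdec, cptp_apply_add_smul hCP, cptp_apply_add_smul hCP,
    cptp_apply_add_smul hCP]
  simp only [Matrix.add_apply, Matrix.smul_apply, smul_eq_mul]
  have h4 : ∀ z1 z2 z3 z4 : ℂ, ‖z1 + z2 + z3 + z4‖ ≤ ‖z1‖ + ‖z2‖ + ‖z3‖ + ‖z4‖ := by
    intro z1 z2 z3 z4
    have a1 := norm_add_le (z1 + z2 + z3) z4
    have a2 := norm_add_le (z1 + z2) z3
    have a3 := norm_add_le z1 z2
    linarith
  refine (h4 _ _ _ _).trans ?_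
  have e1 : ‖-(SH:ℂ) * (E^[n] (1 : Matrix (Fin d) (Fin d) ℂ) a b)‖
      = SH * ‖E^[n] (1 : Matrix (Fin d) (Fin d) ℂ) a b‖ := by
    rw [norm_mul, norm_neg, Complex.norm_real, Real.norm_of_nonneg hSHnn]
  have e3 : ‖Complex.I * (E^[n] (K + (SK:ℂ) • 1) a b)‖
      = ‖E^[n] (K + (SK:ℂ) • 1) a b‖ := by
    rw [norm_mul, Complex.norm_I, one_mul]
  have e4 : ‖-(Complex.I * SK) * (E^[n] (1 : Matrix (Fin d) (Fin d) ℂ) a b)‖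
      = SK * ‖E^[n] (1 : Matrix (Fin d) (Fin d) ℂ) a b‖ := by
    rw [norm_mul, norm_neg, norm_mul, Complex.norm_I, Complex.norm_real,
      Real.norm_of_nonneg hSKnn, one_mul]
  rw [e1, e3, e4]
  have m2 := mul_le_mul_of_nonneg_left t3 hSHnn
  have m4 := mul_le_mul_of_nonneg_left t3 hSKnn
  linarith


theorem tendsto_matrix_iff {f : ℕ → Matrix (Fin d) (Fin d) ℂ} {A : Matrix (Fin d) (Fin d) ℂ} :
    Tendsto f atTop (nhds A) ↔ ∀ a b, Tendsto (fun T => f T a b) atTop (nhds (A a b)) := by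
  constructor
  · intro h a b
    exact ((continuous_apply b).comp (continuous_apply a)).continuousAt.tendsto.comp h
  · intro h
    exact tendsto_pi_nhds.mpr fun a => tendsto_pi_nhds.mpr fun b => h a b

theorem tendsto_inv_nsmul_zero {g : ℕ → Matrix (Fin d) (Fin d) ℂ} (C : ℝ)
    (hb : ∀ n a b, ‖g n a b‖ ≤ C) :
    Tendsto (fun T : ℕ => (T:ℂ)⁻¹ • g T) atTop (nhds 0) := by
  rw [tendsto_matrix_iff]
  intro a b
  have h0 : ∀ T : ℕ, ((T:ℂ)⁻¹ • g T) a b = (T:ℂ)⁻¹ * g T a b := fun T => rfl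
  simp only [h0, Matrix.zero_apply]
  refine squeeze_zero_norm (fun T => ?_)
    (by simpa using ((tendsto_inv_atTop_nhds_zero_nat (𝕜 := ℝ)).const_mul C))
  rw [norm_mul, norm_inv, Complex.norm_natCast, mul_comm]
  exact mul_le_mul_of_nonneg_right (hb T a b) (by positivity)

theorem pow_fixed (L : Module.End ℂ (Matrix (Fin d) (Fin d) ℂ)) {x : Matrix (Fin d) (Fin d) ℂ}
    (hx : L x = x) : ∀ i, (L^i) x = x := by
  intro i
  induction i with
  | zero => simp
  | succ n ih => rw [pow_succ, Module.End.mul_apply, hx, ih]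

theorem telescope_sum (L : Module.End ℂ (Matrix (Fin d) (Fin d) ℂ))
    (y : Matrix (Fin d) (Fin d) ℂ) (T : ℕ) :
    ∑ i ∈ Finset.range T, (L^i) (y - L y) = y - (L^T) y := by
  induction T with
  | zero => simp
  | succ T ih =>
    rw [Finset.sum_range_succ, ih, map_sub, pow_succ, Module.End.mul_apply]
    abel

theorem nonneg_of_tendsto {u : ℕ → ℂ} {z : ℂ} (hu : ∀ᶠ T in atTop, 0 ≤ u T)
    (h : Tendsto u atTop (nhds z)) : 0 ≤ z := by
  have hre : Tendsto (fun T => (u T).re) atTop (nhds z.re) :=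
    (Complex.continuous_re.continuousAt.tendsto).comp h
  have him : Tendsto (fun T => (u T).im) atTop (nhds z.im) :=
    (Complex.continuous_im.continuousAt.tendsto).comp h
  rw [Complex.le_def]
  constructor
  · refine ge_of_tendsto hre ?_
    exact hu.mono fun T hT => (Complex.le_def.mp hT).1
  · have h0 : Tendsto (fun T : ℕ => (u T).im) atTop (nhds 0) := by
      refine Tendsto.congr' ?_ (tendsto_const_nhds (x := (0:ℝ)) (f := atTop))
      refine hu.mono fun T hT => ?_
      simpa using ((Complex.le_def.mp hT).2)
    exact (tendsto_nhds_unique h0 him)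

theorem triple_apply (A X B : Matrix (Fin d) (Fin d) ℂ) (a b : Fin d) :
    (A * X * Bᴴ) a b = ∑ i, ∑ j, A a i * X i j * star (B b j) := by
  simp only [Matrix.mul_apply, Matrix.conjTranspose_apply, Finset.sum_mul]
  exact Finset.sum_comm

theorem kraus_entry (M N : Matrix (Fin d) (Fin d) ℂ) (i j a b : Fin d) :
    (M * Matrix.single i j (1:ℂ) * Nᴴ) a b = M a i * star (N b j) := by
  rw [triple_apply]
  simp [Matrix.single, ite_and, Finset.sum_ite_eq, mul_ite, ite_mul]

theorem trace_mul_std (A : Matrix (Fin d) (Fin d) ℂ) (i j : Fin d) :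
    (A * Matrix.single j i (1:ℂ)).trace = A i j := by
  simp [Matrix.trace, Matrix.diag, Matrix.mul_apply, Matrix.single, ite_and,
    Finset.sum_ite_eq, mul_ite, ite_mul]

theorem trace_std (i j : Fin d) :
    (Matrix.single i j (1:ℂ)).trace = if i = j then 1 else 0 := by
  simp [Matrix.trace, Matrix.diag, Matrix.single, ite_and, Finset.sum_ite_eq,
    eq_comm]

example {a b : ℂ} (ha : 0 ≤ a) (hb : 0 ≤ b) : 0 ≤ a * b := mul_nonneg ha hb

example (z : ℂ) : 0 ≤ z * starRingEnd ℂ z := by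
  rw [Complex.mul_conj]
  exact_mod_cast Complex.normSq_nonneg _

theorem cptp_choi_entry {G : Matrix (Fin d) (Fin d) ℂ → Matrix (Fin d) (Fin d) ℂ}
    {m : ℕ} {M : Fin m → Matrix (Fin d) (Fin d) ℂ}
    (hM : ∀ X, G X = ∑ k, M k * X * (M k)ᴴ) (i j a b : Fin d) :
    G (Matrix.single i j (1:ℂ)) a b = ∑ k, M k a i * star (M k b j) := by
  rw [hM]
  rw [show (∑ k, M k * Matrix.single i j (1:ℂ) * (M k)ᴴ) a b
    = ∑ k, (M k * Matrix.single i j (1:ℂ) * (M k)ᴴ) a b from Matrix.sum_apply _ _ _ _]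
  exact Finset.sum_congr rfl fun k _ => kraus_entry _ _ _ _ _ _

theorem cptp_choi_conj {G : Matrix (Fin d) (Fin d) ℂ → Matrix (Fin d) (Fin d) ℂ}
    (hG : IsCPTP G) (i j a b : Fin d) :
    starRingEnd ℂ (G (Matrix.single j i (1:ℂ)) b a) = G (Matrix.single i j (1:ℂ)) a b := by
  obtain ⟨m, M, hM, -⟩ := hG
  rw [cptp_choi_entry hM, cptp_choi_entry hM, map_sum]
  refine Finset.sum_congr rfl fun k _ => ?_
  simp only [RCLike.star_def, _root_.map_mul, Complex.conj_conj]
  ring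

theorem cptp_choi_quad_nonneg {G : Matrix (Fin d) (Fin d) ℂ → Matrix (Fin d) (Fin d) ℂ}
    (hG : IsCPTP G) (x : Fin d × Fin d → ℂ) :
    0 ≤ ∑ p : Fin d × Fin d, ∑ q : Fin d × Fin d,
      starRingEnd ℂ (x p) * (G (Matrix.single p.2 q.2 (1:ℂ)) p.1 q.1 * x q) := by
  obtain ⟨m, M, hM, -⟩ := hG
  have key : (∑ p : Fin d × Fin d, ∑ q : Fin d × Fin d,
      starRingEnd ℂ (x p) * (G (Matrix.single p.2 q.2 (1:ℂ)) p.1 q.1 * x q))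
      = ∑ k, (∑ p : Fin d × Fin d, starRingEnd ℂ (x p) * M k p.1 p.2) *
          starRingEnd ℂ (∑ p : Fin d × Fin d, starRingEnd ℂ (x p) * M k p.1 p.2) := by
    calc ∑ p : Fin d × Fin d, ∑ q : Fin d × Fin d,
        starRingEnd ℂ (x p) * (G (Matrix.single p.2 q.2 (1:ℂ)) p.1 q.1 * x q)
        = ∑ p : Fin d × Fin d, ∑ q : Fin d × Fin d, ∑ k,
            (starRingEnd ℂ (x p) * M k p.1 p.2) * (x q * starRingEnd ℂ (M k q.1 q.2)) := by
          refine Finset.sum_congr rfl fun p _ => Finset.sum_congr rfl fun q _ => ?_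
          rw [cptp_choi_entry hM, Finset.sum_mul, Finset.mul_sum]
          refine Finset.sum_congr rfl fun k _ => ?_
          simp only [RCLike.star_def]
          ring
      _ = ∑ k, ∑ p : Fin d × Fin d, ∑ q : Fin d × Fin d,
            (starRingEnd ℂ (x p) * M k p.1 p.2) * (x q * starRingEnd ℂ (M k q.1 q.2)) := by
          rw [show (∑ p : Fin d × Fin d, ∑ q : Fin d × Fin d, ∑ k,
              (starRingEnd ℂ (x p) * M k p.1 p.2) * (x q * starRingEnd ℂ (M k q.1 q.2)))
              = ∑ p : Fin d × Fin d, ∑ k, ∑ q : Fin d × Fin d,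
              (starRingEnd ℂ (x p) * M k p.1 p.2) * (x q * starRingEnd ℂ (M k q.1 q.2))
            from Finset.sum_congr rfl fun p _ => Finset.sum_comm]
          exact Finset.sum_comm
      _ = ∑ k, (∑ p : Fin d × Fin d, starRingEnd ℂ (x p) * M k p.1 p.2) *
            starRingEnd ℂ (∑ p : Fin d × Fin d, starRingEnd ℂ (x p) * M k p.1 p.2) := by
          refine Finset.sum_congr rfl fun k _ => ?_
          rw [map_sum, Finset.sum_mul_sum]
          refine Finset.sum_congr rfl fun p _ => Finset.sum_congr rfl fun q _ => ?_
          simp only [_root_.map_mul, Complex.conj_conj]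
  rw [key]
  refine Finset.sum_nonneg fun k _ => ?_
  rw [Complex.mul_conj]
  exact_mod_cast Complex.normSq_nonneg _

theorem cptp_of_limit {E : Matrix (Fin d) (Fin d) ℂ → Matrix (Fin d) (Fin d) ℂ}
    (hE : IsCPTP E) (Pr : Matrix (Fin d) (Fin d) ℂ →ₗ[ℂ] Matrix (Fin d) (Fin d) ℂ)
    (hconv : ∀ X, Tendsto (fun T : ℕ => (T : ℂ)⁻¹ • ∑ i ∈ Finset.range T, E^[i] X)
      atTop (nhds (Pr X))) : IsCPTP ⇑Pr := by
  classical
  have hent : ∀ (Z : Matrix (Fin d) (Fin d) ℂ) (a b : Fin d),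
      Tendsto (fun T : ℕ => ((T:ℂ)⁻¹ • ∑ i ∈ Finset.range T, E^[i] Z) a b)
        atTop (nhds (Pr Z a b)) :=
    fun Z a b => (tendsto_matrix_iff.mp (hconv Z)) a b
  set Cho : Matrix (Fin d × Fin d) (Fin d × Fin d) ℂ :=
    Matrix.of (fun p q => Pr (Matrix.single p.2 q.2 (1:ℂ)) p.1 q.1) with hCho
  have hChoE : ∀ p q : Fin d × Fin d, Cho p q = Pr (Matrix.single p.2 q.2 (1:ℂ)) p.1 q.1 :=
    fun p q => rfl
  have hD : ∀ (T : ℕ) (Z : Matrix (Fin d) (Fin d) ℂ) (a b : Fin d),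
      ((T:ℂ)⁻¹ • ∑ t ∈ Finset.range T, E^[t] Z) a b
      = (T:ℂ)⁻¹ * ∑ t ∈ Finset.range T, (E^[t] Z) a b := by
    intro T Z a b
    rw [Matrix.smul_apply, Matrix.sum_apply, smul_eq_mul]
  have hherm : Cho.IsHermitian := by
    apply Matrix.ext
    intro p q
    rw [Matrix.conjTranspose_apply]
    have h1 : Tendsto (fun T : ℕ => starRingEnd ℂ
        (((T:ℂ)⁻¹ • ∑ t ∈ Finset.range T, E^[t] (Matrix.single q.2 p.2 (1:ℂ))) q.1 p.1))
        atTop (nhds (starRingEnd ℂ (Cho q p))) :=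
      (Complex.continuous_conj.continuousAt.tendsto).comp (hent _ q.1 p.1)
    have h2 : ∀ T : ℕ, starRingEnd ℂ
        (((T:ℂ)⁻¹ • ∑ t ∈ Finset.range T, E^[t] (Matrix.single q.2 p.2 (1:ℂ))) q.1 p.1)
        = ((T:ℂ)⁻¹ • ∑ t ∈ Finset.range T, E^[t] (Matrix.single p.2 q.2 (1:ℂ))) p.1 q.1 := by
      intro T
      rw [hD, hD, _root_.map_mul, map_inv₀, map_natCast, map_sum]
      congr 1
      exact Finset.sum_congr rfl fun t _ =>
        cptp_choi_conj (cptp_iterate hE t) p.2 q.2 p.1 q.1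
    have h3 : Tendsto (fun T : ℕ =>
        ((T:ℂ)⁻¹ • ∑ t ∈ Finset.range T, E^[t] (Matrix.single p.2 q.2 (1:ℂ))) p.1 q.1)
        atTop (nhds (starRingEnd ℂ (Cho q p))) := by
      refine Tendsto.congr h2 h1
    have h4 := hent (Matrix.single p.2 q.2 (1:ℂ)) p.1 q.1
    have := tendsto_nhds_unique h3 h4
    rw [RCLike.star_def, this, hChoE]
  have hquad : ∀ x : Fin d × Fin d → ℂ, 0 ≤ star x ⬝ᵥ (Cho *ᵥ x) := by
    intro x
    have hexp : star x ⬝ᵥ (Cho *ᵥ x)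
        = ∑ p : Fin d × Fin d, ∑ q : Fin d × Fin d,
            starRingEnd ℂ (x p) * (Cho p q * x q) := by
      simp [dotProduct, Matrix.mulVec, Finset.mul_sum, Pi.star_apply, RCLike.star_def]
    rw [hexp]
    set u : ℕ → ℂ := fun T => ∑ p : Fin d × Fin d, ∑ q : Fin d × Fin d, starRingEnd ℂ (x p) *
      (((T:ℂ)⁻¹ • ∑ t ∈ Finset.range T, E^[t] (Matrix.single p.2 q.2 (1:ℂ))) p.1 q.1 * x q)
      with hu
    have hulim : Tendsto u atTop (nhds (∑ p : Fin d × Fin d, ∑ q : Fin d × Fin d,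
        starRingEnd ℂ (x p) * (Cho p q * x q))) := by
      refine tendsto_finset_sum _ fun p _ => tendsto_finset_sum _ fun q _ => ?_
      exact (((hent _ p.1 q.1).mul_const (x q)).const_mul _).congr (fun T => rfl)
    refine nonneg_of_tendsto ?_ hulim
    filter_upwards with T
    have hrw : u T = (T:ℂ)⁻¹ * ∑ t ∈ Finset.range T, ∑ p : Fin d × Fin d,
        ∑ q : Fin d × Fin d, starRingEnd ℂ (x p) *
          ((E^[t] (Matrix.single p.2 q.2 (1:ℂ))) p.1 q.1 * x q) := by
      rw [hu]
      simp only [hD]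
      rw [Finset.mul_sum]
      rw [show ∑ p : Fin d × Fin d, ∑ q : Fin d × Fin d, starRingEnd ℂ (x p) *
          ((T:ℂ)⁻¹ * (∑ t ∈ Finset.range T, (E^[t] (Matrix.single p.2 q.2 (1:ℂ))) p.1 q.1) * x q)
          = ∑ p : Fin d × Fin d, ∑ t ∈ Finset.range T, ∑ q : Fin d × Fin d, (T:ℂ)⁻¹ *
            (starRingEnd ℂ (x p) * ((E^[t] (Matrix.single p.2 q.2 (1:ℂ))) p.1 q.1 * x q)) from ?_]
      · rw [Finset.sum_comm]
        exact Finset.sum_congr rfl fun t _ => by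
          rw [Finset.mul_sum]
          exact Finset.sum_congr rfl fun p _ => by rw [Finset.mul_sum]
      · refine Finset.sum_congr rfl fun p _ => ?_
        rw [Finset.sum_comm]
        refine Finset.sum_congr rfl fun q _ => ?_
        rw [Finset.mul_sum, Finset.sum_mul, Finset.mul_sum]
        refine Finset.sum_congr rfl fun t _ => by ring
    rw [hrw]
    have hc : (0:ℂ) ≤ (T:ℂ)⁻¹ := by
      rw [show ((T:ℂ))⁻¹ = (((T:ℝ)⁻¹ : ℝ) : ℂ) from by push_cast; ring]
      rw [Complex.le_def]
      constructor
      · simp only [Complex.zero_re, Complex.ofReal_re]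
        positivity
      · simp
    refine mul_nonneg hc ?_
    refine Finset.sum_nonneg fun t _ => ?_
    exact cptp_choi_quad_nonneg (cptp_iterate hE t) x
  have hpsd : Cho.PosSemidef := Matrix.posSemidef_iff_dotProduct_mulVec.mpr ⟨hherm, hquad⟩
  obtain ⟨B, hB⟩ : ∃ B, Cho = Bᴴ * B := by
    open scoped MatrixOrder in exact CStarAlgebra.nonneg_iff_eq_star_mul_self.mp hpsd.nonneg
  have htr : ∀ Z : Matrix (Fin d) (Fin d) ℂ, (Pr Z).trace = Z.trace := by
    intro Z
    have h1 : Tendsto (fun T : ℕ => ((T:ℂ)⁻¹ • ∑ i ∈ Finset.range T, E^[i] Z).trace)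
        atTop (nhds ((Pr Z).trace)) := by
      simp only [Matrix.trace, Matrix.diag]
      exact tendsto_finset_sum _ fun i _ => hent Z i i
    have h2 : ∀ᶠ T : ℕ in atTop,
        (((T:ℕ):ℂ)⁻¹ • ∑ i ∈ Finset.range T, E^[i] Z).trace = Z.trace := by
      filter_upwards [eventually_ge_atTop 1] with T hT
      have hT0 : (T : ℂ) ≠ 0 := by
        simp only [ne_eq, Nat.cast_eq_zero]
        omega
      rw [Matrix.trace_smul, Matrix.trace_sum,
        Finset.sum_congr rfl fun t _ => cptp_trace_eq (cptp_iterate hE t) Z,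
        Finset.sum_const, Finset.card_range, ← Nat.cast_smul_eq_nsmul ℂ, smul_smul,
        inv_mul_cancel₀ hT0, one_smul]
    exact tendsto_nhds_unique (Tendsto.congr' h2 h1) tendsto_const_nhds
  have hA : ∀ (X : Matrix (Fin d) (Fin d) ℂ) (a b : Fin d),
      Pr X a b = ∑ i, ∑ j, Cho (a,i) (b,j) * X i j := by
    intro X a b
    conv_lhs => rw [Matrix.matrix_eq_sum_single X]
    rw [map_sum, Matrix.sum_apply]
    refine Finset.sum_congr rfl fun i _ => ?_
    rw [map_sum, Matrix.sum_apply]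
    refine Finset.sum_congr rfl fun j _ => ?_
    rw [show Matrix.single i j (X i j) = (X i j) • Matrix.single i j (1:ℂ) from by
      rw [Matrix.smul_single, smul_eq_mul, mul_one], LinearMap.map_smul, Matrix.smul_apply,
      smul_eq_mul, hChoE, mul_comm]
  set KM : Fin (d*d) → Matrix (Fin d) (Fin d) ℂ :=
    fun k => Matrix.of (fun a i => starRingEnd ℂ (B (finProdFinEquiv.symm k) (a, i))) with hKM
  have hKMdef : ∀ k a i, KM k a i = starRingEnd ℂ (B (finProdFinEquiv.symm k) (a, i)) :=
    fun _ _ _ => rfl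
  have hsumK : ∀ (a i b j : Fin d),
      ∑ k, KM k a i * star (KM k b j) = Cho (a,i) (b,j) := by
    intro a i b j
    calc ∑ k, KM k a i * star (KM k b j)
        = ∑ k' : Fin d × Fin d, starRingEnd ℂ (B k' (a,i)) * B k' (b,j) :=
          (Fintype.sum_equiv finProdFinEquiv
            (fun k' : Fin d × Fin d => starRingEnd ℂ (B k' (a,i)) * B k' (b,j))
            (fun k => KM k a i * star (KM k b j))
            (fun k' => by
              simp only [hKMdef, Equiv.symm_apply_apply, RCLike.star_def,
                Complex.conj_conj])).symm
      _ = (Bᴴ * B) (a,i) (b,j) := by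
          rw [Matrix.mul_apply]
          exact Finset.sum_congr rfl fun k' _ => by rw [Matrix.conjTranspose_apply]; rfl
      _ = Cho (a,i) (b,j) := by rw [← hB]
  have hrep : ∀ X, Pr X = ∑ k, KM k * X * (KM k)ᴴ := by
    intro X
    apply Matrix.ext
    intro a b
    rw [hA X a b, Matrix.sum_apply,
      Finset.sum_congr rfl fun k (_ : k ∈ Finset.univ) => triple_apply (KM k) X (KM k) a b]
    rw [show ∑ k : Fin (d*d), ∑ i, ∑ j, KM k a i * X i j * star (KM k b j)
        = ∑ i, ∑ j, ∑ k : Fin (d*d), KM k a i * X i j * star (KM k b j) from by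
      rw [show (∑ k : Fin (d*d), ∑ i, ∑ j, KM k a i * X i j * star (KM k b j))
          = ∑ k : Fin (d*d), ∑ i, ∑ j, KM k a i * X i j * star (KM k b j) from rfl,
        Finset.sum_comm]
      exact Finset.sum_congr rfl fun i _ => Finset.sum_comm]
    refine Finset.sum_congr rfl fun i _ => Finset.sum_congr rfl fun j _ => ?_
    rw [← hsumK a i b j, Finset.sum_mul]
    exact Finset.sum_congr rfl fun k _ => by ring
  refine ⟨d*d, KM, hrep, ?_⟩
  have hS : ∀ Z : Matrix (Fin d) (Fin d) ℂ,
      ((∑ k, (KM k)ᴴ * KM k) * Z).trace = Z.trace := by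
    intro Z
    calc ((∑ k, (KM k)ᴴ * KM k) * Z).trace
        = ∑ k, ((KM k)ᴴ * KM k * Z).trace := by rw [Finset.sum_mul, Matrix.trace_sum]
      _ = ∑ k, (KM k * Z * (KM k)ᴴ).trace :=
          Finset.sum_congr rfl fun k _ => (Matrix.trace_mul_cycle _ _ _).symm
      _ = (∑ k, KM k * Z * (KM k)ᴴ).trace := (Matrix.trace_sum _ _).symm
      _ = (Pr Z).trace := by rw [← hrep]
      _ = Z.trace := htr Z
  apply Matrix.ext
  intro i j
  have h1 := hS (Matrix.single j i (1:ℂ))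
  rw [trace_mul_std, trace_std] at h1
  rw [h1, Matrix.one_apply]
  by_cases hij : i = j
  · simp [hij]
  · rw [if_neg hij, if_neg (Ne.symm hij)]

end CesaroAux

/-- The Cesàro means `(1/T) ∑_{i<T} E^i(X)` of a CPTP map `E` converge; the limit
defines a CPTP map `E∞` satisfying `E∞ ∘ E = E ∘ E∞ = E∞ ∘ E∞ = E∞`, whose fixed-point
set equals its range and equals `fix(E)`: `E∞` is a CPTP projection onto `fix(E)`. -/
theorem cesaro_limit_is_CPTP_projection_onto_fix {d : ℕ}
    (E : Matrix (Fin d) (Fin d) ℂ → Matrix (Fin d) (Fin d) ℂ) (hE : IsCPTP E) :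
    ∃ Einf : Matrix (Fin d) (Fin d) ℂ → Matrix (Fin d) (Fin d) ℂ,
      (∀ X, Tendsto (fun T : ℕ => (T : ℂ)⁻¹ • ∑ i ∈ Finset.range T, E^[i] X)
        atTop (nhds (Einf X))) ∧
      IsCPTP Einf ∧
      (∀ X, Einf (E X) = Einf X) ∧
      (∀ X, E (Einf X) = Einf X) ∧
      (∀ X, Einf (Einf X) = Einf X) ∧
      (∀ X, Einf X = X ↔ E X = X) ∧
      (∀ X, (∃ Y, Einf Y = X) ↔ E X = X) := by
  classical
  obtain ⟨L, hL⟩ := CesaroAux.cptp_exists_linearMap hE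
  have hit : ∀ (n : ℕ) (X : Matrix (Fin d) (Fin d) ℂ), E^[n] X = (L ^ n) X := by
    intro n
    induction n with
    | zero => intro X; simp
    | succ n ih =>
      intro X
      rw [Function.iterate_succ_apply, ih, ← hL, ← Module.End.mul_apply, ← pow_succ]
  set f : Matrix (Fin d) (Fin d) ℂ →ₗ[ℂ] Matrix (Fin d) (Fin d) ℂ := LinearMap.id - L with hf
  have hfy : ∀ y, f y = y - L y := fun y => by
    rw [hf, LinearMap.sub_apply, LinearMap.id_apply]
  have hmemker : ∀ X, X ∈ LinearMap.ker f ↔ L X = X := by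
    intro X
    rw [LinearMap.mem_ker, hfy, sub_eq_zero, eq_comm]
  have hbd : ∀ y : Matrix (Fin d) (Fin d) ℂ,
      ∃ C : ℝ, ∀ (T : ℕ) (a b : Fin d), ‖(y - (L ^ T) y) a b‖ ≤ C := by
    intro y
    obtain ⟨C, hC⟩ := CesaroAux.cptp_pow_entry_bound hE y
    refine ⟨C + C, fun T a b => ?_⟩
    have h1 : ‖y a b‖ ≤ C := by simpa using hC 0 a b
    have h2 : ‖(L ^ T) y a b‖ ≤ C := by rw [← hit]; exact hC T a b
    calc ‖(y - (L ^ T) y) a b‖ = ‖y a b - (L ^ T) y a b‖ := rfl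
      _ ≤ ‖y a b‖ + ‖(L ^ T) y a b‖ := norm_sub_le _ _
      _ ≤ C + C := add_le_add h1 h2
  have hdisj : Disjoint (LinearMap.ker f) (LinearMap.range f) := by
    rw [Submodule.disjoint_def]
    intro x hxk hxr
    obtain ⟨y, hy⟩ := hxr
    have hLx : L x = x := (hmemker x).mp hxk
    obtain ⟨C, hC⟩ := hbd y
    have h1 : Tendsto (fun T : ℕ => (T:ℂ)⁻¹ • (y - (L ^ T) y)) atTop (nhds 0) :=
      CesaroAux.tendsto_inv_nsmul_zero C hC
    have h2 : ∀ T : ℕ, 1 ≤ T → (T:ℂ)⁻¹ • (y - (L ^ T) y) = x := by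
      intro T hT
      have h3 : y - (L ^ T) y = ∑ i ∈ Finset.range T, (L ^ i) x := by
        rw [← CesaroAux.telescope_sum L y T]
        refine Finset.sum_congr rfl fun i _ => ?_
        rw [show x = y - L y from by rw [← hy, hfy]]
      have hT0 : (T : ℂ) ≠ 0 := by
        simp only [ne_eq, Nat.cast_eq_zero]
        omega
      rw [h3, Finset.sum_congr rfl fun i _ => CesaroAux.pow_fixed L hLx i,
        Finset.sum_const, Finset.card_range, ← Nat.cast_smul_eq_nsmul ℂ, smul_smul,
        inv_mul_cancel₀ hT0, one_smul]
    have h5 : Tendsto (fun T : ℕ => (T:ℂ)⁻¹ • (y - (L ^ T) y)) atTop (nhds x) := by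
      refine Tendsto.congr' ?_ tendsto_const_nhds
      filter_upwards [eventually_ge_atTop 1] with T hT
      exact (h2 T hT).symm
    exact tendsto_nhds_unique h5 h1
  have hcompl : IsCompl (LinearMap.ker f) (LinearMap.range f) := by
    refine ⟨hdisj, codisjoint_iff.mpr ?_⟩
    apply Submodule.eq_top_of_finrank_eq
    have h1 := Submodule.finrank_sup_add_finrank_inf_eq (LinearMap.ker f) (LinearMap.range f)
    rw [hdisj.eq_bot] at h1
    rw [finrank_bot] at h1
    have h2 := LinearMap.finrank_range_add_finrank_ker f
    omega
  set pr := (LinearMap.ker f).linearProjOfIsCompl (LinearMap.range f) hcompl with hpr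
  set Pr : Matrix (Fin d) (Fin d) ℂ →ₗ[ℂ] Matrix (Fin d) (Fin d) ℂ :=
    (LinearMap.ker f).subtype.comp pr with hPrdef
  have hPrmem : ∀ X, Pr X ∈ LinearMap.ker f := fun X => (pr X).2
  have hPrk : ∀ x, x ∈ LinearMap.ker f → Pr x = x := by
    intro x hx
    have := Submodule.linearProjOfIsCompl_apply_left hcompl ⟨x, hx⟩
    rw [hPrdef]
    simp only [LinearMap.comp_apply, Submodule.subtype_apply, ← hpr]
    exact congrArg Subtype.val this
  have hPrr : ∀ x, x ∈ LinearMap.range f → Pr x = 0 := by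
    intro x hx
    have := Submodule.linearProjOfIsCompl_apply_right hcompl ⟨x, hx⟩
    rw [hPrdef]
    simp only [LinearMap.comp_apply, Submodule.subtype_apply, ← hpr]
    exact congrArg Subtype.val this
  have hsplit : ∀ X, ∃ a ∈ LinearMap.ker f, ∃ b ∈ LinearMap.range f, X = a + b ∧ Pr X = a := by
    intro X
    have hX : X ∈ (LinearMap.ker f) ⊔ (LinearMap.range f) := by
      rw [hcompl.sup_eq_top]; trivial
    obtain ⟨a, ha, b, hb, hab⟩ := Submodule.mem_sup.mp hX
    refine ⟨a, ha, b, hb, hab.symm, ?_⟩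
    rw [← hab, map_add, hPrk a ha, hPrr b hb, add_zero]
  have hconv : ∀ X, Tendsto (fun T : ℕ => (T : ℂ)⁻¹ • ∑ i ∈ Finset.range T, E^[i] X)
      atTop (nhds (Pr X)) := by
    intro X
    obtain ⟨a, ha, b, hb, hXab, hPrX⟩ := hsplit X
    obtain ⟨y, hy⟩ := hb
    have hsum : ∀ T : ℕ, ∑ i ∈ Finset.range T, E^[i] X = (T • a) + (y - (L ^ T) y) := by
      intro T
      have heach : ∀ i ∈ Finset.range T, E^[i] X = a + (L ^ i) b := by
        intro i _
        rw [hit, hXab, map_add, CesaroAux.pow_fixed L ((hmemker a).mp ha) i]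
      rw [Finset.sum_congr rfl heach, Finset.sum_add_distrib, Finset.sum_const,
        Finset.card_range]
      congr 1
      have hb' : b = y - L y := by rw [← hy, hfy]
      calc ∑ i ∈ Finset.range T, (L ^ i) b
          = ∑ i ∈ Finset.range T, (L ^ i) (y - L y) := by rw [← hb']
        _ = y - (L ^ T) y := CesaroAux.telescope_sum L y T
    have h1 : Tendsto (fun T : ℕ => (T:ℂ)⁻¹ • (T • a)) atTop (nhds a) := by
      refine Tendsto.congr' ?_ tendsto_const_nhds
      filter_upwards [eventually_ge_atTop 1] with T hT
      have hT0 : (T : ℂ) ≠ 0 := by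
        simp only [ne_eq, Nat.cast_eq_zero]
        omega
      rw [← Nat.cast_smul_eq_nsmul ℂ, smul_smul, inv_mul_cancel₀ hT0, one_smul]
    obtain ⟨C, hC⟩ := hbd y
    have h2 : Tendsto (fun T : ℕ => (T:ℂ)⁻¹ • (y - (L ^ T) y)) atTop (nhds 0) :=
      CesaroAux.tendsto_inv_nsmul_zero C hC
    rw [hPrX]
    have h3 := h1.add h2
    rw [add_zero] at h3
    refine Tendsto.congr (fun T => ?_) h3
    rw [hsum, smul_add]
  refine ⟨⇑Pr, hconv, ?_, ?_, ?_, ?_, ?_, ?_⟩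
  · exact CesaroAux.cptp_of_limit hE Pr hconv
  · -- Pr (E X) = Pr X
    intro X
    obtain ⟨a, ha, b, hb, hXab, hPrX⟩ := hsplit X
    obtain ⟨y, hy⟩ := hb
    have hEX : E X = a + L b := by
      rw [← hL, hXab, map_add, (hmemker a).mp ha]
    have hLb : L b ∈ LinearMap.range f := by
      refine ⟨L y, ?_⟩
      rw [hfy, ← hy, hfy, map_sub]
    rw [hEX, map_add, hPrk a ha, hPrr _ hLb, add_zero, hPrX]
  · -- E (Pr X) = Pr X
    intro X
    rw [← hL]
    exact (hmemker _).mp (hPrmem X)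
  · -- idempotent
    intro X
    exact hPrk _ (hPrmem X)
  · -- fixed iff
    intro X
    constructor
    · intro h
      rw [← hL]
      exact (hmemker X).mp (h ▸ hPrmem X)
    · intro h
      exact hPrk X ((hmemker X).mpr (by rw [hL]; exact h))
  · -- range iff
    intro X
    constructor
    · rintro ⟨Y, hY⟩
      rw [← hL]
      exact (hmemker X).mp (hY ▸ hPrmem Y)
    · intro h
      exact ⟨X, hPrk X ((hmemker X).mpr (by rw [hL]; exact h))⟩
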